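/- For A ∈ ℝ^{n×n}, τ > 0, 0 ≤ t ≤ τ, and x₀ ∈ ℝ^n, the interpolation error bound ‖e^{tA}x₀ − x₀ − (t/τ)(e^{τA} − I)x₀‖ ≤ (t/τ)·(e^{τ‖A‖} − 1 − τ‖A‖)·‖x₀‖ holds. -/

import Mathlib

set_option synthInstance.maxHeartbeats 1000000
set_option maxHeartbeats 1000000

open NormedSpace Finset

/-- Interpolation error bound:
`‖e^{tA}x₀ − x₀ − (t/τ)(e^{τA} − I)x₀‖ ≤ (t/τ)(e^{τ‖A‖} − 1 − τ‖A‖)‖x₀‖` for `0 ≤ t ≤ τ`. -/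
theorem stmt5 (n : ℕ) (A : (Fin n → ℝ) →L[ℝ] (Fin n → ℝ))
    (τ t : ℝ) (hτ : 0 < τ) (ht0 : 0 ≤ t) (htτ : t ≤ τ) (x₀ : Fin n → ℝ) :
    ‖(NormedSpace.exp (t • A)) x₀ - x₀ -
        (t / τ) • ((NormedSpace.exp (τ • A) - 1) x₀)‖ ≤
      (t / τ) * (Real.exp (τ * ‖A‖) - 1 - τ * ‖A‖) * ‖x₀‖ := by
  have hτ0 : τ ≠ 0 := hτ.ne'
  set N := ‖A‖ with hN
  have hN0 : 0 ≤ N := norm_nonneg A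
  -- the applied exponential series
  set a : ℕ → (Fin n → ℝ) := fun k => (t ^ k / (k.factorial : ℝ)) • (A ^ k) x₀ with ha
  set b : ℕ → (Fin n → ℝ) := fun k => (τ ^ k / (k.factorial : ℝ)) • (A ^ k) x₀ with hb
  have key : ∀ s : ℝ, (NormedSpace.exp (s • A)) x₀
      = ∑' k : ℕ, (s ^ k / (k.factorial : ℝ)) • (A ^ k) x₀ := by
    intro s
    rw [NormedSpace.exp_eq_tsum ℝ]
    show (ContinuousLinearMap.apply ℝ (Fin n → ℝ) x₀)
        (∑' k : ℕ, ((k.factorial : ℝ))⁻¹ • (s • A) ^ k) = _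
    rw [(ContinuousLinearMap.apply ℝ (Fin n → ℝ) x₀).map_tsum
      (NormedSpace.expSeries_summable' (𝕂 := ℝ) (s • A))]
    congr 1
    ext k
    simp only [ContinuousLinearMap.apply_apply, smul_pow, ContinuousLinearMap.smul_apply,
      smul_smul, div_eq_inv_mul]
  have hsa : Summable a := by
    have := (NormedSpace.expSeries_summable' (𝕂 := ℝ) (t • A)).mapL
      (ContinuousLinearMap.apply ℝ (Fin n → ℝ) x₀)
    convert this using 2 with k
    case e'_3 => rfl
    case e'_4 => rfl
    simp [ha, smul_pow, smul_smul, div_eq_inv_mul]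
  have hsb : Summable b := by
    have := (NormedSpace.expSeries_summable' (𝕂 := ℝ) (τ • A)).mapL
      (ContinuousLinearMap.apply ℝ (Fin n → ℝ) x₀)
    convert this using 2 with k
    case e'_3 => rfl
    case e'_4 => rfl
    simp [hb, smul_pow, smul_smul, div_eq_inv_mul]
  set u : ℕ → (Fin n → ℝ) := fun k => a k - (t / τ) • b k with hu
  have hsu : Summable u := hsa.sub (hsb.const_smul _)
  -- rewrite LHS vector
  have hLHS : (NormedSpace.exp (t • A)) x₀ - x₀ -
      (t / τ) • ((NormedSpace.exp (τ • A) - 1) x₀) = ∑' k : ℕ, u (k + 2) := by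
    have h2 : (∑ i ∈ range 2, u i) + ∑' k : ℕ, u (k + 2) = ∑' k, u k :=
      Summable.sum_add_tsum_nat_add 2 hsu
    have htsum : ∑' k, u k = (NormedSpace.exp (t • A)) x₀
        - (t / τ) • (NormedSpace.exp (τ • A)) x₀ := by
      rw [key t, key τ, Summable.tsum_sub hsa (hsb.const_smul _), Summable.tsum_const_smul _ hsb]
    have hu0 : u 0 = (1 - t / τ) • x₀ := by
      simp [hu, ha, hb, sub_smul]
    have hu1 : u 1 = 0 := by
      have hdt : t / τ * τ = t := div_mul_cancel₀ t hτ0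
      simp [hu, ha, hb, smul_smul, hdt]
    have hsum2 : (∑ i ∈ range 2, u i) = (1 - t / τ) • x₀ := by
      rw [Finset.sum_range_succ, Finset.sum_range_one, hu0, hu1, add_zero]
    have : ∑' k : ℕ, u (k + 2) = ∑' k, u k - (1 - t / τ) • x₀ := by
      rw [← h2, hsum2]; abel
    rw [this, htsum]
    simp only [ContinuousLinearMap.sub_apply, ContinuousLinearMap.one_apply, smul_sub,
      sub_smul, one_smul]
    abel
  rw [hLHS]
  -- the bound on each term
  set g : ℕ → ℝ := fun k => (t / τ) * ((τ * N) ^ k / (k.factorial : ℝ)) * ‖x₀‖ with hg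
  have htτ' : 0 ≤ t / τ := div_nonneg ht0 hτ.le
  have hbound : ∀ k : ℕ, ‖u (k + 2)‖ ≤ g (k + 2) := by
    intro k
    have hAk : ‖(A ^ (k + 2)) x₀‖ ≤ N ^ (k + 2) * ‖x₀‖ := by
      calc ‖(A ^ (k + 2)) x₀‖ ≤ ‖A ^ (k + 2)‖ * ‖x₀‖ := (A ^ (k + 2)).le_opNorm x₀
        _ ≤ N ^ (k + 2) * ‖x₀‖ := by
            gcongr
            exact norm_pow_le' A (Nat.succ_pos _)
    have hcoeff : |t ^ (k + 2) / ((k+2).factorial : ℝ) - (t / τ) * (τ ^ (k + 2) / ((k+2).factorial : ℝ))|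
        ≤ (t / τ) * τ ^ (k + 2) / ((k+2).factorial : ℝ) := by
      have h1 : t ^ (k + 2) ≤ (t / τ) * τ ^ (k + 2) := by
        rw [div_mul_eq_mul_div, le_div_iff₀ hτ]
        calc t ^ (k + 2) * τ = t * t ^ (k + 1) * τ := by ring
          _ ≤ t * τ ^ (k + 1) * τ := by gcongr
          _ = t * τ ^ (k + 2) := by ring
      have h0 : 0 ≤ t ^ (k + 2) := pow_nonneg ht0 _
      have hfac : (0:ℝ) < ((k+2).factorial : ℝ) := by positivity
      have habs : |t ^ (k+2) - (t/τ) * τ^(k+2)| ≤ (t/τ) * τ^(k+2) := by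
        rw [abs_sub_comm, abs_of_nonneg (sub_nonneg.2 h1)]
        exact sub_le_self _ h0
      calc |t ^ (k + 2) / ((k+2).factorial : ℝ) - t / τ * (τ ^ (k + 2) / ((k+2).factorial : ℝ))|
          = |t ^ (k+2) - (t/τ) * τ^(k+2)| / ((k+2).factorial : ℝ) := by
            rw [show t ^ (k + 2) / ((k+2).factorial : ℝ)
              - t / τ * (τ ^ (k + 2) / ((k+2).factorial : ℝ))
              = (t ^ (k+2) - (t/τ) * τ^(k+2)) / ((k+2).factorial : ℝ) from by ring,
              abs_div, abs_of_pos hfac]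
        _ ≤ (t/τ) * τ^(k+2) / ((k+2).factorial : ℝ) := by gcongr
    calc ‖u (k + 2)‖ = |t ^ (k + 2) / ((k+2).factorial : ℝ) - (t / τ) * (τ ^ (k + 2) / ((k+2).factorial : ℝ))|
          * ‖(A ^ (k + 2)) x₀‖ := by
          rw [hu]
          simp only [ha, hb, smul_smul, ← sub_smul, norm_smul, Real.norm_eq_abs]
      _ ≤ ((t / τ) * τ ^ (k + 2) / ((k+2).factorial : ℝ)) * (N ^ (k + 2) * ‖x₀‖) := by
          apply mul_le_mul hcoeff hAk (norm_nonneg _) (by positivity)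
      _ = g (k + 2) := by
          simp only [hg, mul_pow]
          ring
  have hgsum : Summable fun k => g (k + 2) := by
    have := (Real.summable_pow_div_factorial (τ * N)).comp_injective
      (add_left_injective 2)
    exact ((this.mul_left (t / τ)).mul_right ‖x₀‖).congr fun k => by
      simp [hg, Function.comp]; try ring
  have hnsum : Summable fun k => ‖u (k + 2)‖ :=
    Summable.of_nonneg_of_le (fun k => norm_nonneg _) hbound hgsum
  calc ‖∑' k : ℕ, u (k + 2)‖ ≤ ∑' k, ‖u (k + 2)‖ := norm_tsum_le_tsum_norm hnsum
    _ ≤ ∑' k, g (k + 2) := Summable.tsum_le_tsum hbound hnsum hgsum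
    _ = (t / τ) * (Real.exp (τ * N) - 1 - τ * N) * ‖x₀‖ := by
        have hf : Summable (fun k : ℕ => (τ * N) ^ k / (k.factorial : ℝ)) :=
          Real.summable_pow_div_factorial (τ * N)
        have h2 : (∑ i ∈ range 2, (τ * N) ^ i / (i.factorial : ℝ))
            + ∑' k : ℕ, (τ * N) ^ (k + 2) / ((k+2).factorial : ℝ) = ∑' k : ℕ, (τ * N) ^ k / (k.factorial : ℝ) :=
          Summable.sum_add_tsum_nat_add 2 hf
        have hexp : ∑' k : ℕ, (τ * N) ^ k / (k.factorial : ℝ) = Real.exp (τ * N) := by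
          rw [Real.exp_eq_exp_ℝ, NormedSpace.exp_eq_tsum_div]
        have hshift : ∑' k : ℕ, (τ * N) ^ (k + 2) / ((k+2).factorial : ℝ)
            = Real.exp (τ * N) - 1 - τ * N := by
          have : (∑ i ∈ range 2, (τ * N) ^ i / (i.factorial : ℝ)) = 1 + τ * N := by
            simp [Finset.sum_range_succ]
          rw [← hexp, ← h2, this]; ring
        rw [show (fun k : ℕ => g (k + 2)) = fun k =>
          ((t / τ) * ‖x₀‖) * ((τ * N) ^ (k + 2) / ((k+2).factorial : ℝ)) by
            funext k; simp only [hg]; ring]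
        rw [tsum_mul_left, hshift]
        ring
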